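/- arXiv:1806.01829 — 4 statements merged into one kernel-verified Lean document; each statement's English description precedes it below -/
import Mathlib

section
/- For any matrix A ∈ ℝ^{m×n}, if spark(A) > 2K, then for every y ∈ ℝᵐ there is at most one K-sparse vector x with A x = y. -/
/-- The number of nonzero entries of a vector (its ℓ⁰ "norm"). -/
noncomputable def sparseCount {n : ℕ} (x : Fin n → ℝ) : ℕ :=
  (Finset.univ.filter (fun i => x i ≠ 0)).card

/-- If `spark(A) > 2K` (every nonzero null vector of `A` has more than `2K`
nonzero entries), then for every `y` there is at most one `K`-sparse `x` with `A x = y`. -/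
theorem unique_sparse_solution_of_spark {m n K : ℕ} (A : Matrix (Fin m) (Fin n) ℝ)
    (hspark : ∀ h : Fin n → ℝ, h ≠ 0 → A.mulVec h = 0 → 2 * K < sparseCount h) :
    ∀ (y : Fin m → ℝ) (x₁ x₂ : Fin n → ℝ),
      sparseCount x₁ ≤ K → sparseCount x₂ ≤ K →
      A.mulVec x₁ = y → A.mulVec x₂ = y → x₁ = x₂ := by
  intro y x₁ x₂ h1 h2 e1 e2
  by_contra hne
  have hh : x₁ - x₂ ≠ 0 := sub_ne_zero.mpr hne
  have hnull : A.mulVec (x₁ - x₂) = 0 := by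
    rw [Matrix.mulVec_sub, e1, e2, sub_self]
  have hlt := hspark _ hh hnull
  have hsub : (Finset.univ.filter (fun i => (x₁ - x₂) i ≠ 0)) ⊆
      (Finset.univ.filter (fun i => x₁ i ≠ 0)) ∪ (Finset.univ.filter (fun i => x₂ i ≠ 0)) := by
    intro i hi
    simp only [Finset.mem_filter, Finset.mem_union, Finset.mem_univ, true_and] at hi ⊢
    by_contra hc
    push_neg at hc
    exact hi (by simp [Pi.sub_apply, hc.1, hc.2])
  have : sparseCount (x₁ - x₂) ≤ sparseCount x₁ + sparseCount x₂ :=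
    le_trans (Finset.card_le_card hsub) (Finset.card_union_le _ _)
  omega
end

section
/- Conversely, if for every y ∈ ℝᵐ there is at most one K-sparse vector x with A x = y, then spark(A) > 2K. -/
/-- If for every `y` there is at most one `K`-sparse `x` with `A x = y`, then
`spark(A) > 2K`: every nonzero null vector of `A` has more than `2K` nonzero entries. -/
theorem spark_of_unique_sparse_solution {m n K : ℕ} (A : Matrix (Fin m) (Fin n) ℝ)
    (huniq : ∀ (y : Fin m → ℝ) (x₁ x₂ : Fin n → ℝ),
      sparseCount x₁ ≤ K → sparseCount x₂ ≤ K →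
      A.mulVec x₁ = y → A.mulVec x₂ = y → x₁ = x₂) :
    ∀ h : Fin n → ℝ, h ≠ 0 → A.mulVec h = 0 → 2 * K < sparseCount h := by
  intro h hne hAh
  by_contra hle
  push_neg at hle
  set S : Finset (Fin n) := Finset.univ.filter (fun i => h i ≠ 0) with hS
  have hScard : S.card ≤ 2 * K := hle
  have hSne : S.Nonempty := by
    rcases Function.ne_iff.mp hne with ⟨i, hi⟩
    exact ⟨i, by simpa [hS] using hi⟩
  have hmin : min S.card K ≤ S.card := min_le_left _ _
  obtain ⟨T, hTS, hTcard⟩ := Finset.exists_subset_card_eq hmin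
  have hTK : T.card ≤ K := hTcard.le.trans (min_le_right _ _)
  have hDK : (S \ T).card ≤ K := by
    rw [Finset.card_sdiff_of_subset hTS, hTcard]
    rcases le_total S.card K with hc | hc
    · simp [min_eq_left hc]
    · rw [min_eq_right hc]; omega
  set x₁ : Fin n → ℝ := fun i => if i ∈ T then h i else 0 with hx1
  set x₂ : Fin n → ℝ := fun i => if i ∈ S \ T then -h i else 0 with hx2
  have hsub : h = x₁ - x₂ := by
    funext i
    by_cases hiS : i ∈ S
    · by_cases hiT : i ∈ T
      · simp [hx1, hx2, hiT]
      · simp [hx1, hx2, hiT, hiS]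
    · have h0 : h i = 0 := by
        by_contra hc; exact hiS (by simp [hS, hc])
      have hiT : i ∉ T := fun hc => hiS (hTS hc)
      simp [hx1, hx2, hiT, hiS, h0]
  have hs1 : sparseCount x₁ ≤ K := by
    refine le_trans (Finset.card_le_card ?_) hTK
    intro i hi
    simp only [Finset.mem_filter, Finset.mem_univ, true_and] at hi
    by_contra hc
    exact hi (by simp [hx1, hc])
  have hs2 : sparseCount x₂ ≤ K := by
    refine le_trans (Finset.card_le_card ?_) hDK
    intro i hi
    simp only [Finset.mem_filter, Finset.mem_univ, true_and] at hi
    by_contra hc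
    apply hi
    simp only [hx2, if_neg hc]
  have hAeq : A.mulVec x₁ = A.mulVec x₂ := by
    have : A.mulVec (x₁ - x₂) = 0 := by rw [← hsub]; exact hAh
    rw [Matrix.mulVec_sub] at this
    exact sub_eq_zero.mp this
  have hx12 : x₁ = x₂ := huniq (A.mulVec x₂) x₁ x₂ hs1 hs2 hAeq rfl
  have hK0 : K ≠ 0 := by
    intro hK
    subst hK
    have := hScard
    simp at this
    exact hSne.ne_empty this
  have hTne : T.Nonempty := by
    rw [← Finset.card_pos, hTcard]
    exact lt_min (Finset.card_pos.mpr hSne) (Nat.pos_of_ne_zero hK0)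
  obtain ⟨i, hiT⟩ := hTne
  have hiS : i ∈ S := hTS hiT
  have h1 : x₁ i = h i := by simp [hx1, hiT]
  have h2 : x₂ i = 0 := by simp [hx2, hiT]
  have : h i = 0 := by rw [← h1, hx12, h2]
  rw [hS, Finset.mem_filter] at hiS
  exact hiS.2 this
end

section
/- For any matrix A with unit-normed columns, spark(A) ≥ 1 + 1/μ(A), where μ(A) is the coherence of A. -/
/-- For a matrix `A` with unit-norm columns and coherence `μ > 0`,
`spark(A) ≥ 1 + 1/μ`: every nonzero null vector has at least `1 + 1/μ` nonzero entries. -/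
theorem spark_ge_one_add_inv_coherence {m n : ℕ} (A : Matrix (Fin m) (Fin n) ℝ)
    (hcols : ∀ j, (∑ i, (A i j) ^ 2) = 1)
    (μ : ℝ) (hμpos : 0 < μ)
    (hμ : IsGreatest {r : ℝ | ∃ i j : Fin n, i ≠ j ∧ r = |∑ k, A k i * A k j|} μ) :
    ∀ h : Fin n → ℝ, h ≠ 0 → A.mulVec h = 0 → 1 + 1 / μ ≤ (sparseCount h : ℝ) := by
  intro h hne hAh
  classical
  set S := Finset.univ.filter (fun i => h i ≠ 0) with hS
  have hSne : S.Nonempty := by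
    obtain ⟨i, hi⟩ := Function.ne_iff.mp hne
    exact ⟨i, Finset.mem_filter.mpr ⟨Finset.mem_univ _, hi⟩⟩
  obtain ⟨i₀, hi₀S, hmax⟩ := S.exists_max_image (fun i => |h i|) hSne
  have hi₀ne : h i₀ ≠ 0 := (Finset.mem_filter.mp hi₀S).2
  have hi₀pos : 0 < |h i₀| := abs_pos.mpr hi₀ne
  -- key identity : ⟨A_{i₀}, A h⟩ = 0 rearranged
  have key : ∑ j, (∑ k, A k i₀ * A k j) * h j = 0 := by
    have h0 : ∑ k, A k i₀ * (A.mulVec h) k = 0 := by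
      simp [hAh]
    calc ∑ j, (∑ k, A k i₀ * A k j) * h j
        = ∑ j, ∑ k, A k i₀ * (A k j * h j) := by
          refine Finset.sum_congr rfl fun j _ => ?_
          rw [Finset.sum_mul]
          exact Finset.sum_congr rfl fun k _ => by ring
      _ = ∑ k, ∑ j, A k i₀ * (A k j * h j) := Finset.sum_comm
      _ = ∑ k, A k i₀ * (A.mulVec h) k := by
          refine Finset.sum_congr rfl fun k _ => ?_
          rw [Matrix.mulVec, dotProduct, Finset.mul_sum]
      _ = 0 := h0
  have hGii : (∑ k, A k i₀ * A k i₀) = 1 := by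
    have := hcols i₀
    simpa [sq] using this
  have hsplit : h i₀ + ∑ j ∈ Finset.univ.erase i₀, (∑ k, A k i₀ * A k j) * h j = 0 := by
    have := key
    rw [← Finset.add_sum_erase _ _ (Finset.mem_univ i₀)] at this
    rw [hGii, one_mul] at this
    exact this
  have heq : h i₀ = -∑ j ∈ Finset.univ.erase i₀, (∑ k, A k i₀ * A k j) * h j := by
    linarith
  -- restrict the sum to S.erase i₀
  have hrestrict : ∑ j ∈ Finset.univ.erase i₀, (∑ k, A k i₀ * A k j) * h j
      = ∑ j ∈ S.erase i₀, (∑ k, A k i₀ * A k j) * h j := by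
    symm
    refine Finset.sum_subset ?_ ?_
    · intro j hj
      exact Finset.mem_erase.mpr ⟨(Finset.mem_erase.mp hj).1, Finset.mem_univ j⟩
    · intro j hj hjS
      have : h j = 0 := by
        by_contra hc
        exact hjS (Finset.mem_erase.mpr ⟨(Finset.mem_erase.mp hj).1,
          Finset.mem_filter.mpr ⟨Finset.mem_univ j, hc⟩⟩)
      simp [this]
  -- bound
  have hbound : |h i₀| ≤ ((S.erase i₀).card : ℝ) * (μ * |h i₀|) := by
    have habs : |h i₀| = |∑ j ∈ S.erase i₀, (∑ k, A k i₀ * A k j) * h j| := by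
      rw [heq, hrestrict, abs_neg]
    rw [habs]
    conv_rhs => rw [← habs]
    calc |∑ j ∈ S.erase i₀, (∑ k, A k i₀ * A k j) * h j|
        ≤ ∑ j ∈ S.erase i₀, |(∑ k, A k i₀ * A k j) * h j| :=
          Finset.abs_sum_le_sum_abs _ _
      _ ≤ ∑ j ∈ S.erase i₀, μ * |h i₀| := by
          refine Finset.sum_le_sum fun j hj => ?_
          rw [abs_mul]
          have hjne : j ≠ i₀ := (Finset.mem_erase.mp hj).1
          have hμj : |∑ k, A k i₀ * A k j| ≤ μ := by
            refine hμ.2 ?_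
            exact ⟨i₀, j, hjne.symm, rfl⟩
          have hhj : |h j| ≤ |h i₀| := hmax j (Finset.mem_erase.mp hj).2
          exact mul_le_mul hμj hhj (abs_nonneg _) hμpos.le
      _ = ((S.erase i₀).card : ℝ) * (μ * |h i₀|) := by
          rw [Finset.sum_const, nsmul_eq_mul]
  have hcard : ((S.erase i₀).card : ℝ) = (S.card : ℝ) - 1 := by
    rw [Finset.card_erase_of_mem hi₀S]
    have : 1 ≤ S.card := Finset.card_pos.mpr hSne
    push_cast [Nat.cast_sub this]
    ring
  have h1 : 1 ≤ μ * ((S.card : ℝ) - 1) := by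
    have := hbound
    rw [hcard] at this
    nlinarith
  have : 1 / μ ≤ (S.card : ℝ) - 1 := by
    rw [div_le_iff₀ hμpos]
    nlinarith
  have hsc : (sparseCount h : ℝ) = (S.card : ℝ) := by
    simp [sparseCount, hS]
  rw [hsc]
  linarith
end

section
/- If K < (1/2)(1 + 1/μ(A)), then for each y ∈ ℝᵐ there exists at most one K-sparse vector x with A x = y. -/
/-- If `K < (1/2)(1 + 1/μ(A))` then for each `y` there exists at most one
`K`-sparse vector `x` with `A x = y`. -/
theorem unique_sparse_solution_of_coherence {m n K : ℕ} (A : Matrix (Fin m) (Fin n) ℝ)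
    (hcols : ∀ j, (∑ i, (A i j) ^ 2) = 1)
    (μ : ℝ) (hμpos : 0 < μ)
    (hμ : IsGreatest {r : ℝ | ∃ i j : Fin n, i ≠ j ∧ r = |∑ k, A k i * A k j|} μ)
    (hK : (K : ℝ) < (1 / 2) * (1 + 1 / μ)) :
    ∀ (y : Fin m → ℝ) (x₁ x₂ : Fin n → ℝ),
      sparseCount x₁ ≤ K → sparseCount x₂ ≤ K →
      A.mulVec x₁ = y → A.mulVec x₂ = y → x₁ = x₂ := by
  intro y x₁ x₂ h₁ h₂ hA₁ hA₂
  by_contra hne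
  set z : Fin n → ℝ := x₁ - x₂ with hzdef
  have hz : A.mulVec z = 0 := by
    rw [hzdef, Matrix.mulVec_sub, hA₁, hA₂, sub_self]
  have hzne : z ≠ 0 := sub_ne_zero.mpr hne
  -- support bound
  set S : Finset (Fin n) := Finset.univ.filter (fun i => z i ≠ 0) with hS
  have hScard : (S.card : ℝ) ≤ 2 * K := by
    have hsub : S ⊆ (Finset.univ.filter (fun i => x₁ i ≠ 0)) ∪
        (Finset.univ.filter (fun i => x₂ i ≠ 0)) := by
      intro i hi
      simp only [hS, Finset.mem_filter, Finset.mem_union, Finset.mem_univ, true_and] at hi ⊢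
      by_contra hc
      push_neg at hc
      exact hi (by simp [hzdef, hc.1, hc.2])
    have := (Finset.card_le_card hsub).trans (Finset.card_union_le _ _)
    have : S.card ≤ K + K := this.trans (add_le_add h₁ h₂)
    calc (S.card : ℝ) ≤ (K : ℝ) + K := by exact_mod_cast this
    _ = 2 * K := by ring
  -- Gram identity
  have key : ∑ i, ∑ j, z i * z j * (∑ k, A k i * A k j) = 0 := by
    have h1 : ∀ k, (∑ j, A k j * z j) = 0 := fun k => congrFun hz k
    have : ∑ i, ∑ j, z i * z j * (∑ k, A k i * A k j)
        = ∑ k, (∑ i, A k i * z i) * (∑ j, A k j * z j) := by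
      calc ∑ i, ∑ j, z i * z j * (∑ k, A k i * A k j)
          = ∑ i, ∑ j, ∑ k, z i * z j * (A k i * A k j) := by simp_rw [Finset.mul_sum]
        _ = ∑ i, ∑ k, ∑ j, z i * z j * (A k i * A k j) :=
            Finset.sum_congr rfl fun i _ => Finset.sum_comm
        _ = ∑ k, ∑ i, ∑ j, z i * z j * (A k i * A k j) := Finset.sum_comm
        _ = ∑ k, ∑ i, ∑ j, (A k i * z i) * (A k j * z j) :=
            Finset.sum_congr rfl fun k _ => Finset.sum_congr rfl fun i _ =>
              Finset.sum_congr rfl fun j _ => by ring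
        _ = ∑ k, (∑ i, A k i * z i) * (∑ j, A k j * z j) := by
            simp_rw [Finset.sum_mul_sum]
    rw [this]
    simp [h1]
  set Q : ℝ := ∑ i, z i ^ 2 with hQ
  have hQpos : 0 < Q := by
    obtain ⟨i, hi⟩ := Function.ne_iff.mp hzne
    have : 0 < z i ^ 2 := by
      have := abs_pos.mpr hi
      nlinarith [sq_abs (z i)]
    exact lt_of_lt_of_le this (Finset.single_le_sum (fun j _ => sq_nonneg (z j)) (Finset.mem_univ i))
  -- split diagonal
  have hdiag : ∀ i : Fin n, z i * z i * (∑ k, A k i * A k i) = z i ^ 2 := by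
    intro i
    have := hcols i
    simp_rw [sq] at this ⊢
    rw [this]; ring
  have split : Q + ∑ i, ∑ j ∈ Finset.univ.erase i, z i * z j * (∑ k, A k i * A k j) = 0 := by
    rw [← key, hQ]
    rw [← Finset.sum_add_distrib]
    refine Finset.sum_congr rfl fun i _ => ?_
    rw [← hdiag i]
    exact Finset.add_sum_erase Finset.univ
      (fun j => z i * z j * ∑ k, A k i * A k j) (Finset.mem_univ i)
  -- bound off-diagonal
  have hbound : ∀ i : Fin n, ∀ j ∈ Finset.univ.erase i,
      -(μ * (|z i| * |z j|)) ≤ z i * z j * (∑ k, A k i * A k j) := by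
    intro i j hj
    have hij : j ≠ i := (Finset.mem_erase.mp hj).1
    have hG : |∑ k, A k i * A k j| ≤ μ := hμ.2 ⟨i, j, hij.symm, rfl⟩
    have h1 : |z i * z j * (∑ k, A k i * A k j)| ≤ |z i| * |z j| * μ := by
      rw [abs_mul, abs_mul]
      exact mul_le_mul_of_nonneg_left hG (by positivity)
    nlinarith [neg_abs_le (z i * z j * (∑ k, A k i * A k j))]
  have hoff : -(μ * ∑ i, ∑ j ∈ Finset.univ.erase i, |z i| * |z j|)
      ≤ ∑ i, ∑ j ∈ Finset.univ.erase i, z i * z j * (∑ k, A k i * A k j) := by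
    rw [Finset.mul_sum, ← Finset.sum_neg_distrib]
    apply Finset.sum_le_sum
    intro i _
    rw [Finset.mul_sum, ← Finset.sum_neg_distrib]
    exact Finset.sum_le_sum (hbound i)
  -- absolute sums
  have habs : ∑ i, ∑ j ∈ Finset.univ.erase i, |z i| * |z j|
      = (∑ i, |z i|) ^ 2 - Q := by
    have : ∀ i : Fin n, ∑ j ∈ Finset.univ.erase i, |z i| * |z j|
        = |z i| * (∑ j, |z j|) - z i ^ 2 := by
      intro i
      rw [← Finset.mul_sum, Finset.sum_erase_eq_sub (Finset.mem_univ i)]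
      rw [mul_sub, ← abs_mul, ← sq, abs_sq]
    simp_rw [this]
    rw [Finset.sum_sub_distrib, ← Finset.sum_mul, ← sq, hQ]
  -- Cauchy–Schwarz on support
  have hCS : (∑ i, |z i|) ^ 2 ≤ 2 * K * Q := by
    have h1 : (∑ i, |z i|) = ∑ i ∈ S, |z i| := by
      rw [Finset.sum_filter]
      apply Finset.sum_congr rfl
      intro i _
      by_cases h : z i = 0 <;> simp [h]
    have h2 := sq_sum_le_card_mul_sum_sq (s := S) (f := fun i => |z i|)
    have h3 : ∑ i ∈ S, |z i| ^ 2 ≤ Q := by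
      simp_rw [sq_abs]
      exact Finset.sum_le_sum_of_subset_of_nonneg (Finset.subset_univ S)
        (fun i _ _ => sq_nonneg _)
    have hSnn : (0:ℝ) ≤ ∑ i ∈ S, |z i| ^ 2 := Finset.sum_nonneg (fun i _ => sq_nonneg _)
    calc (∑ i, |z i|) ^ 2 = (∑ i ∈ S, |z i|) ^ 2 := by rw [h1]
      _ ≤ (S.card : ℝ) * ∑ i ∈ S, |z i| ^ 2 := by exact_mod_cast h2
      _ ≤ 2 * K * Q := by nlinarith [hQpos.le]
  -- conclude
  have hμK : 2 * (K:ℝ) * μ < μ + 1 := by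
    have h2 := mul_lt_mul_of_pos_right hK (mul_pos two_pos hμpos)
    have h3 : (1:ℝ)/2 * (1 + 1/μ) * (2*μ) = μ + 1 := by field_simp
    nlinarith
  nlinarith [hoff, habs, hCS, split, hQpos, hμpos,
    mul_le_mul_of_nonneg_left hCS hμpos.le,
    mul_lt_mul_of_pos_right hμK hQpos]
end
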